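/- Let m be the normalized volume measure on the unit sphere S^{d−1}. For each μ > 0 let A_μ be a Poisson point process on S^{d−1} with intensity μ (with respect to m), and let α_μ > 0 be radii such that α_μ^{4(d−1)}·μ stays bounded away from 0 as μ → ∞. Then E[max_{p ∈ S^{d−1}} |A_μ ∩ B_{α_μ}(p)|] ≍ α_μ^{d−1}·μ as μ → ∞. -/

import Mathlib

set_option maxHeartbeats 1000000

open scoped Nat NNReal ENNReal
open MeasureTheory Metric ProbabilityTheory Filter Real

namespace PoissonAux

lemma exp_tsum (x : ℝ) : ∑' n : ℕ, x ^ n / n ! = Real.exp x := by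
  rw [Real.exp_eq_exp_ℝ, NormedSpace.exp_eq_tsum_div]

lemma summable_exp_series (x : ℝ) : Summable (fun n : ℕ => x ^ n / n !) :=
  Real.summable_pow_div_factorial x

lemma summable_mul_exp_series (x : ℝ) : Summable (fun n : ℕ => (n : ℝ) * (x ^ n / n !)) := by
  rw [← summable_nat_add_iff 1]
  have : (fun n : ℕ => ((n + 1 : ℕ) : ℝ) * (x ^ (n + 1) / (n + 1)!)) =
      fun n : ℕ => x * (x ^ n / n !) := by
    ext n
    have hf : ((n + 1)! : ℝ) = (n + 1) * n ! := by
      rw [Nat.factorial_succ]; push_cast; ring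
    field_simp [hf]
    rw [hf]; push_cast; ring
  rw [this]
  exact (summable_exp_series x).mul_left x

lemma tsum_mul_exp_series (x : ℝ) : ∑' n : ℕ, (n : ℝ) * (x ^ n / n !) = x * Real.exp x := by
  rw [Summable.tsum_eq_zero_add (summable_mul_exp_series x)]
  simp only [Nat.cast_zero, zero_mul, zero_add]
  have : (fun n : ℕ => ((n + 1 : ℕ) : ℝ) * (x ^ (n + 1) / (n + 1)!)) =
      fun n : ℕ => x * (x ^ n / n !) := by
    ext n
    have hf : ((n + 1)! : ℝ) = (n + 1) * n ! := by
      rw [Nat.factorial_succ]; push_cast; ring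
    field_simp [hf]
    rw [hf]; push_cast; ring
  rw [this, tsum_mul_left, exp_tsum]


lemma shift_sq (x : ℝ) : (fun n : ℕ => ((n + 1 : ℕ) : ℝ) ^ 2 * (x ^ (n + 1) / (n + 1)!)) =
    fun n : ℕ => x * ((n : ℝ) * (x ^ n / n !)) + x * (x ^ n / n !) := by
  ext n
  have hf : ((n + 1)! : ℝ) = (n + 1) * n ! := by
    rw [Nat.factorial_succ]; push_cast; ring
  have hn : (n ! : ℝ) ≠ 0 := Nat.cast_ne_zero.mpr n.factorial_ne_zero
  field_simp [hf]
  rw [hf]; push_cast; ring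

lemma summable_sq_mul_exp_series (x : ℝ) :
    Summable (fun n : ℕ => (n : ℝ) ^ 2 * (x ^ n / n !)) := by
  rw [← summable_nat_add_iff 1]
  have := shift_sq x
  push_cast at this ⊢
  rw [this]
  exact (((summable_mul_exp_series x).mul_left x)).add ((summable_exp_series x).mul_left x)

lemma tsum_sq_mul_exp_series (x : ℝ) :
    ∑' n : ℕ, (n : ℝ) ^ 2 * (x ^ n / n !) = (x ^ 2 + x) * Real.exp x := by
  rw [Summable.tsum_eq_zero_add (summable_sq_mul_exp_series x)]
  simp only [Nat.cast_zero, zero_mul, zero_add, ne_eq, OfNat.ofNat_ne_zero,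
    not_false_eq_true, zero_pow]
  have := shift_sq x
  push_cast at this ⊢
  rw [this, Summable.tsum_add (((summable_mul_exp_series x).mul_left x))
    ((summable_exp_series x).mul_left x), tsum_mul_left, tsum_mul_left,
    tsum_mul_exp_series, exp_tsum]
  ring

lemma poisson_var_key (r : ℝ≥0) : ∀ k : ℕ, ((r : ℝ) - k) ^ 2 * poissonPMFReal r k =
    Real.exp (-(r : ℝ)) * ((r : ℝ) ^ 2 * ((r : ℝ) ^ k / k !)
      - 2 * r * ((k : ℝ) * ((r : ℝ) ^ k / k !)) + (k : ℝ) ^ 2 * ((r : ℝ) ^ k / k !)) := by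
  intro k
  unfold poissonPMFReal
  have hn : (k ! : ℝ) ≠ 0 := Nat.cast_ne_zero.mpr k.factorial_ne_zero
  field_simp
  ring

lemma summable_poisson_var (r : ℝ≥0) :
    Summable (fun k : ℕ => ((r : ℝ) - k) ^ 2 * poissonPMFReal r k) := by
  rw [funext (poisson_var_key r)]
  exact ((((summable_exp_series (r:ℝ)).mul_left ((r:ℝ) ^ 2)).sub
    ((summable_mul_exp_series (r:ℝ)).mul_left (2 * (r:ℝ)))).add
    (summable_sq_mul_exp_series (r:ℝ))).mul_left _

/-- Variance-type identity for the Poisson pmf. -/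
lemma poisson_var (r : ℝ≥0) :
    ∑' k : ℕ, ((r : ℝ) - k) ^ 2 * poissonPMFReal r k = r := by
  rw [tsum_congr (poisson_var_key r), tsum_mul_left]
  have hs1 := (summable_exp_series (r : ℝ)).mul_left ((r : ℝ) ^ 2)
  have hs2 := (summable_mul_exp_series (r : ℝ)).mul_left (2 * (r : ℝ))
  have hs3 := summable_sq_mul_exp_series (r : ℝ)
  rw [Summable.tsum_add (hs1.sub hs2) hs3, Summable.tsum_sub hs1 hs2, tsum_mul_left, tsum_mul_left,
    exp_tsum, tsum_mul_exp_series, tsum_sq_mul_exp_series]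
  have : (r:ℝ) ^ 2 * rexp r - 2 * r * ((r:ℝ) * rexp r) + ((r:ℝ) ^ 2 + r) * rexp r
      = (r:ℝ) * rexp r := by ring
  rw [this, mul_comm (rexp (-(r:ℝ))), mul_assoc, ← Real.exp_add, add_neg_cancel,
    Real.exp_zero, mul_one]


lemma pow_div_factorial_le_exp (x : ℝ) (hx : 0 ≤ x) (k : ℕ) : x ^ k / k ! ≤ Real.exp x := by
  rw [← exp_tsum]
  exact Summable.le_tsum (summable_exp_series x) k (fun i _ => by positivity)

/-- Pointwise exponential bound on the Poisson pmf. -/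
lemma poisson_pmf_le (r : ℝ≥0) (k : ℕ) :
    poissonPMFReal r k ≤ Real.exp ((Real.exp 1 - 1) * r) * Real.exp (-(k : ℝ)) := by
  unfold poissonPMFReal
  have h1 : (Real.exp 1 * r) ^ k / k ! ≤ Real.exp (Real.exp 1 * r) :=
    pow_div_factorial_le_exp _ (by positivity) k
  have h2 : (r : ℝ) ^ k / k ! = Real.exp (-(k : ℝ)) * ((Real.exp 1 * r) ^ k / k !) := by
    rw [mul_pow, ← Real.exp_nat_mul, mul_one]
    have he : rexp (-(k:ℝ)) * rexp k = 1 := by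
      rw [← Real.exp_add, neg_add_cancel, Real.exp_zero]
    calc (r:ℝ) ^ k / k ! = (rexp (-(k:ℝ)) * rexp k) * ((r:ℝ) ^ k / k !) := by rw [he, one_mul]
      _ = rexp (-(k:ℝ)) * (rexp k * (r:ℝ) ^ k / k !) := by ring
  rw [mul_div_assoc, h2, ← mul_assoc]
  calc Real.exp (-(r:ℝ)) * Real.exp (-(k:ℝ)) * ((Real.exp 1 * r) ^ k / k !)
      ≤ Real.exp (-(r:ℝ)) * Real.exp (-(k:ℝ)) * Real.exp (Real.exp 1 * r) := by
        apply mul_le_mul_of_nonneg_left h1 (by positivity)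
    _ = Real.exp ((Real.exp 1 - 1) * r) * Real.exp (-(k : ℝ)) := by
        rw [← Real.exp_add, ← Real.exp_add, ← Real.exp_add]
        ring_nf

/-- Chebyshev bound for the lower Poisson tail. -/
lemma poisson_head_le (r : ℝ≥0) (hr : 0 < (r : ℝ)) (n : ℕ) (hn : (n : ℝ) ≤ (r : ℝ) / 2) :
    ∑ k ∈ Finset.range n, poissonPMFReal r k ≤ 4 / r := by
  have step : ∀ k ∈ Finset.range n, poissonPMFReal r k ≤
      (4 / (r : ℝ) ^ 2) * (((r : ℝ) - k) ^ 2 * poissonPMFReal r k) := by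
    intro k hk
    have hk' : (k : ℝ) < (r : ℝ) / 2 := by
      have : (k : ℝ) ≤ (n : ℝ) - 1 := by
        have := Finset.mem_range.mp hk
        have : (k : ℝ) + 1 ≤ n := by exact_mod_cast this
        linarith
      linarith
    have hgap : (r : ℝ) / 2 ≤ (r : ℝ) - k := by linarith
    have h1 : (r : ℝ) ^ 2 / 4 ≤ ((r : ℝ) - k) ^ 2 := by nlinarith
    have hp : (0 : ℝ) ≤ poissonPMFReal r k := poissonPMFReal_nonneg
    rw [← mul_assoc]
    have hfac : 1 ≤ 4 / (r : ℝ) ^ 2 * ((r : ℝ) - k) ^ 2 := by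
      rw [div_mul_eq_mul_div, le_div_iff₀ (by positivity)]
      nlinarith
    exact le_mul_of_one_le_left hp hfac
  calc ∑ k ∈ Finset.range n, poissonPMFReal r k
      ≤ ∑ k ∈ Finset.range n, (4 / (r : ℝ) ^ 2) * (((r : ℝ) - k) ^ 2 * poissonPMFReal r k) :=
        Finset.sum_le_sum step
    _ = (4 / (r : ℝ) ^ 2) * ∑ k ∈ Finset.range n, (((r : ℝ) - k) ^ 2 * poissonPMFReal r k) := by
        rw [Finset.mul_sum]
    _ ≤ (4 / (r : ℝ) ^ 2) * ∑' k : ℕ, (((r : ℝ) - k) ^ 2 * poissonPMFReal r k) := by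
        apply mul_le_mul_of_nonneg_left _ (div_nonneg (by norm_num) (sq_nonneg _))
        exact Summable.sum_le_tsum _ (fun i _ => mul_nonneg (sq_nonneg _) poissonPMFReal_nonneg) (summable_poisson_var r)
    _ = 4 / r := by
        rw [poisson_var]
        field_simp


/-- A maximal `α`-separated set in a compact metric space: it is finite, `α`-dense,
and `α`-separated. -/
lemma exists_net {S : Type*} [MetricSpace S] [CompactSpace S] (a : ℝ) (ha : 0 < a) :
    ∃ T : Finset S, (∀ p : S, ∃ t ∈ T, dist p t < a) ∧
      ((T : Set S).Pairwise fun x y => a ≤ dist x y) := by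
  classical
  obtain ⟨s₀, -, hs₀fin, hs₀cov⟩ :=
    finite_cover_balls_of_compact (isCompact_univ (X := S)) (half_pos ha)
  set Sep : Finset S → Prop := fun T => (T : Set S).Pairwise fun x y => a ≤ dist x y with hSep
  have cardbound : ∀ T : Finset S, Sep T → T.card ≤ hs₀fin.toFinset.card := by
    intro T hT
    have hmap : ∀ t ∈ T, ∃ x ∈ hs₀fin.toFinset, t ∈ ball x (a / 2) := by
      intro t _
      have := hs₀cov (Set.mem_univ t)
      simp only [Set.mem_iUnion, exists_prop] at this
      obtain ⟨x, hx, hxt⟩ := this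
      exact ⟨x, hs₀fin.mem_toFinset.mpr hx, hxt⟩
    choose f hf1 hf2 using hmap
    apply Finset.card_le_card_of_injOn (fun t => if h : t ∈ T then f t h else t)
    · intro t ht
      simp only [ht, dif_pos]
      rw [dif_pos (Finset.mem_coe.mp ht)]; exact hf1 t (Finset.mem_coe.mp ht)
    · intro t₁ ht₁ t₂ ht₂ heq
      simp only [Finset.mem_coe] at ht₁ ht₂
      simp only [dif_pos ht₁, dif_pos ht₂] at heq
      by_contra hne
      have h1 := hf2 t₁ ht₁
      have h2 := hf2 t₂ ht₂
      rw [mem_ball] at h1 h2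
      have : dist t₁ t₂ < a := by
        calc dist t₁ t₂ ≤ dist t₁ (f t₁ ht₁) + dist (f t₂ ht₂) t₂ := by
              rw [heq]; exact dist_triangle _ _ _
          _ < a / 2 + a / 2 := by
              rw [dist_comm (f t₂ ht₂) t₂]; exact add_lt_add h1 h2
          _ = a := add_halves a
      exact absurd (hT ht₁ ht₂ hne) (not_le.mpr this)
  set C : Set ℕ := {n | ∃ T : Finset S, Sep T ∧ T.card = n} with hC
  have hCne : C.Nonempty := ⟨0, ∅, by simp [hSep], rfl⟩
  have hCbdd : BddAbove C := by
    refine ⟨hs₀fin.toFinset.card, ?_⟩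
    rintro n ⟨T, hT, rfl⟩
    exact cardbound T hT
  obtain ⟨T, hTsep, hTcard⟩ := Nat.sSup_mem hCne hCbdd
  refine ⟨T, ?_, hTsep⟩
  intro p
  by_contra hp
  push_neg at hp
  have hpT : p ∉ T := fun h => absurd (hp p h) (by simp [ha])
  have hsep' : Sep (insert p T) := by
    rw [hSep]
    intro x hx y hy hxy
    simp only [Finset.coe_insert, Set.mem_insert_iff, Finset.mem_coe] at hx hy
    rcases hx with rfl | hx <;> rcases hy with rfl | hy
    · exact absurd rfl hxy
    · exact hp y hy
    · rw [dist_comm]; exact hp x hx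
    · exact hTsep hx hy hxy
  have : (insert p T).card ∈ C := ⟨insert p T, hsep', rfl⟩
  have hle := le_csSup hCbdd this
  rw [Finset.card_insert_of_notMem hpT, hTcard] at hle
  omega


lemma exp_neg_eq_pow (j : ℕ) : Real.exp (-(j : ℝ)) = Real.exp (-1) ^ j := by
  rw [← Real.exp_nat_mul]
  norm_num

lemma summable_exp_neg : Summable (fun j : ℕ => Real.exp (-(j : ℝ))) := by
  rw [funext exp_neg_eq_pow]
  exact summable_geometric_of_lt_one (Real.exp_nonneg _) (Real.exp_lt_one_iff.mpr (by norm_num))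

lemma tsum_exp_neg_le : ∑' j : ℕ, Real.exp (-(j : ℝ)) ≤ 2 := by
  rw [funext exp_neg_eq_pow,
    tsum_geometric_of_lt_one (Real.exp_nonneg _) (Real.exp_lt_one_iff.mpr (by norm_num))]
  have h1 : Real.exp (-1) ≤ 1 / 2 := by
    rw [Real.exp_neg]
    have h2 : (2 : ℝ) ≤ Real.exp 1 := by nlinarith [Real.add_one_le_exp (1 : ℝ)]
    rw [inv_le_comm₀ (Real.exp_pos 1) (by norm_num)] at *
    linarith
  have h2 : (1 : ℝ) / 2 ≤ 1 - Real.exp (-1) := by linarith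
  calc (1 - Real.exp (-1))⁻¹ ≤ ((1 : ℝ) / 2)⁻¹ := by
        apply inv_anti₀ (by norm_num) h2
    _ = 2 := by norm_num

/-- Upper bound on the upper tail of an `ℕ`-valued random variable with
exponentially-bounded point probabilities. -/
lemma tail_le {Ω : Type*} [MeasurableSpace Ω] (Pr : Measure Ω) (Y : Ω → ℕ) (c : ℝ)
    (hc : 0 ≤ c)
    (hpmf : ∀ k : ℕ, Pr {ω | Y ω = k} ≤ ENNReal.ofReal (c * Real.exp (-(k : ℝ)))) (n : ℕ) :
    Pr {ω | n ≤ Y ω} ≤ ENNReal.ofReal (2 * c * Real.exp (-(n : ℝ))) := by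
  have hsub : {ω | n ≤ Y ω} ⊆ ⋃ i : ℕ, {ω | Y ω = n + i} := by
    intro ω hω
    simp only [Set.mem_setOf_eq] at hω
    exact Set.mem_iUnion.mpr ⟨Y ω - n, by simp only [Set.mem_setOf_eq]; omega⟩
  calc Pr {ω | n ≤ Y ω} ≤ Pr (⋃ i : ℕ, {ω | Y ω = n + i}) := measure_mono hsub
    _ ≤ ∑' i : ℕ, Pr {ω | Y ω = n + i} := measure_iUnion_le _
    _ ≤ ∑' i : ℕ, ENNReal.ofReal (c * Real.exp (-((n + i : ℕ) : ℝ))) := by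
        exact ENNReal.tsum_le_tsum fun i => hpmf (n + i)
    _ = ENNReal.ofReal (∑' i : ℕ, c * Real.exp (-((n + i : ℕ) : ℝ))) := by
        rw [ENNReal.ofReal_tsum_of_nonneg (fun i => by positivity)]
        apply Summable.mul_left
        have : (fun i : ℕ => Real.exp (-((n + i : ℕ) : ℝ))) =
            fun i : ℕ => Real.exp (-(n : ℝ)) * Real.exp (-(i : ℝ)) := by
          ext i
          rw [← Real.exp_add]
          push_cast
          ring_nf
        rw [this]
        exact summable_exp_neg.mul_left _
    _ ≤ ENNReal.ofReal (2 * c * Real.exp (-(n : ℝ))) := by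
        apply ENNReal.ofReal_le_ofReal
        have : (fun i : ℕ => c * Real.exp (-((n + i : ℕ) : ℝ))) =
            fun i : ℕ => (c * Real.exp (-(n : ℝ))) * Real.exp (-(i : ℝ)) := by
          ext i
          rw [mul_assoc, ← Real.exp_add]
          push_cast
          ring_nf
        rw [this, tsum_mul_left]
        calc c * Real.exp (-(n : ℝ)) * ∑' i : ℕ, Real.exp (-(i : ℝ))
            ≤ c * Real.exp (-(n : ℝ)) * 2 :=
              mul_le_mul_of_nonneg_left tsum_exp_neg_le (by positivity)
          _ = 2 * c * Real.exp (-(n : ℝ)) := by ring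

/-- Layer-cake upper bound for the expectation of the max of finitely many `ℕ`-valued
random variables with uniformly exponentially small tails above level `T₀`. -/
lemma lintegral_layered {Ω : Type*} [MeasurableSpace Ω] (Pr : Measure Ω)
    [IsProbabilityMeasure Pr] {ι : Type*} (T : Finset ι) (Y : ι → Ω → ℕ) (T₀ : ℕ)
    (htail : ∀ t ∈ T, ∀ j : ℕ,
      Pr {ω | T₀ + 1 + j ≤ Y t ω} ≤ ENNReal.ofReal (2 * Real.exp (-(j : ℝ))))
    (f : Ω → ℝ≥0∞)
    (hf : ∀ᵐ ω ∂Pr, ∃ t ∈ T, f ω ≤ (Y t ω : ℝ≥0∞)) :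
    ∫⁻ ω, f ω ∂Pr ≤ (T₀ : ℝ≥0∞) + T.card * ENNReal.ofReal 4 := by
  classical
  set E : ι → ℕ → Set Ω := fun t j => toMeasurable Pr {ω | T₀ + 1 + j ≤ Y t ω} with hE
  set g : Ω → ℝ≥0∞ := fun ω =>
    (T₀ : ℝ≥0∞) + ∑ t ∈ T, ∑' j : ℕ, (E t j).indicator (fun _ => (1 : ℝ≥0∞)) ω with hg
  have hfg : ∀ᵐ ω ∂Pr, f ω ≤ g ω := by
    filter_upwards [hf] with ω hω
    obtain ⟨t, ht, hle⟩ := hω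
    have key : (Y t ω : ℝ≥0∞) ≤ (T₀ : ℝ≥0∞) +
        ∑' j : ℕ, (E t j).indicator (fun _ => (1 : ℝ≥0∞)) ω := by
      rcases le_or_gt (Y t ω) T₀ with h | h
      · exact le_add_right (by exact_mod_cast h)
      · set r := Y t ω - T₀ with hr
        have hsum : (r : ℝ≥0∞) ≤ ∑' j : ℕ, (E t j).indicator (fun _ => (1 : ℝ≥0∞)) ω := by
          have : ∀ j ∈ Finset.range r, (1 : ℝ≥0∞) ≤
              (E t j).indicator (fun _ => (1 : ℝ≥0∞)) ω := by
            intro j hj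
            have hj' : T₀ + 1 + j ≤ Y t ω := by
              have := Finset.mem_range.mp hj
              omega
            have : ω ∈ E t j := subset_toMeasurable Pr _ hj'
            simp [Set.indicator_of_mem this]
          calc (r : ℝ≥0∞) = ∑ j ∈ Finset.range r, 1 := by simp
            _ ≤ ∑ j ∈ Finset.range r, (E t j).indicator (fun _ => (1 : ℝ≥0∞)) ω :=
              Finset.sum_le_sum this
            _ ≤ ∑' j : ℕ, (E t j).indicator (fun _ => (1 : ℝ≥0∞)) ω :=
              ENNReal.sum_le_tsum _
        calc (Y t ω : ℝ≥0∞) = (T₀ : ℝ≥0∞) + (r : ℝ≥0∞) := by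
              rw [← Nat.cast_add]
              congr 1
              omega
          _ ≤ _ := add_le_add_right hsum _
    calc f ω ≤ (Y t ω : ℝ≥0∞) := hle
      _ ≤ (T₀ : ℝ≥0∞) + ∑' j : ℕ, (E t j).indicator (fun _ => (1 : ℝ≥0∞)) ω := key
      _ ≤ g ω := by
        apply add_le_add_right
        exact Finset.single_le_sum (f := fun t => ∑' j : ℕ,
          (E t j).indicator (fun _ => (1 : ℝ≥0∞)) ω) (fun _ _ => zero_le) ht
  have hEmeas : ∀ t j, MeasurableSet (E t j) := fun t j => measurableSet_toMeasurable _ _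
  have hgint : ∫⁻ ω, g ω ∂Pr = (T₀ : ℝ≥0∞) + ∑ t ∈ T, ∑' j : ℕ, Pr (E t j) := by
    rw [hg]
    rw [lintegral_add_left measurable_const]
    rw [lintegral_const]
    simp only [measure_univ, mul_one]
    congr 1
    rw [lintegral_finset_sum]
    · congr 1
      ext t
      rw [lintegral_tsum fun j => ((measurable_const.indicator (hEmeas t j)).aemeasurable)]
      congr 1
      ext j
      rw [lintegral_indicator_const (hEmeas t j), one_mul]
    · intro t _
      exact Measurable.ennreal_tsum fun j => measurable_const.indicator (hEmeas t j)
  calc ∫⁻ ω, f ω ∂Pr ≤ ∫⁻ ω, g ω ∂Pr := lintegral_mono_ae hfg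
    _ = (T₀ : ℝ≥0∞) + ∑ t ∈ T, ∑' j : ℕ, Pr (E t j) := hgint
    _ ≤ (T₀ : ℝ≥0∞) + ∑ t ∈ T, ∑' j : ℕ, ENNReal.ofReal (2 * Real.exp (-(j : ℝ))) := by
        apply add_le_add_right
        apply Finset.sum_le_sum
        intro t ht
        apply ENNReal.tsum_le_tsum
        intro j
        rw [hE]
        rw [measure_toMeasurable]
        exact htail t ht j
    _ ≤ (T₀ : ℝ≥0∞) + T.card * ENNReal.ofReal 4 := by
        apply add_le_add_right
        have hone : ∑' j : ℕ, ENNReal.ofReal (2 * Real.exp (-(j : ℝ))) ≤ ENNReal.ofReal 4 := by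
          rw [← ENNReal.ofReal_tsum_of_nonneg (fun j => by positivity)
            (summable_exp_neg.mul_left 2)]
          apply ENNReal.ofReal_le_ofReal
          rw [tsum_mul_left]
          nlinarith [tsum_exp_neg_le]
        calc ∑ t ∈ T, ∑' j : ℕ, ENNReal.ofReal (2 * Real.exp (-(j : ℝ)))
            ≤ ∑ t ∈ T, ENNReal.ofReal 4 := Finset.sum_le_sum fun _ _ => hone
          _ = T.card * ENNReal.ofReal 4 := by
            rw [Finset.sum_const, nsmul_eq_mul]


/-- Lower bound on a Lebesgue integral from a bound on the lower tail, without any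
measurability assumption on the integrand. -/
lemma lintegral_ge_of_head {Ω : Type*} [MeasurableSpace Ω] (Pr : Measure Ω)
    [IsProbabilityMeasure Pr] (Yf : Ω → ℕ) (n : ℕ)
    (hhead : Pr {ω | Yf ω < n} ≤ ENNReal.ofReal (1 / 2))
    (f : Ω → ℝ≥0∞) (hle : ∀ ω, (Yf ω : ℝ≥0∞) ≤ f ω) :
    ENNReal.ofReal ((n : ℝ) / 2) ≤ ∫⁻ ω, f ω ∂Pr := by
  set F : Set Ω := toMeasurable Pr {ω | Yf ω < n} with hF
  have hFm : MeasurableSet F := measurableSet_toMeasurable _ _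
  have hhalf : ENNReal.ofReal (1 / 2 : ℝ) = (2 : ℝ≥0∞)⁻¹ := by
    rw [show (1 / 2 : ℝ) = (2 : ℝ)⁻¹ by norm_num,
      ENNReal.ofReal_inv_of_pos (by norm_num), ENNReal.ofReal_ofNat]
  have hPrF : Pr F ≤ 2⁻¹ := by
    rw [hF, measure_toMeasurable]
    rw [hhalf] at hhead
    exact hhead
  have hPrFc : (2 : ℝ≥0∞)⁻¹ ≤ Pr Fᶜ := by
    have hsum : Pr F + Pr Fᶜ = 1 := by
      rw [← measure_union (disjoint_compl_right) hFm.compl, Set.union_compl_self]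
      exact measure_univ
    have h1 : (1 : ℝ≥0∞) ≤ 2⁻¹ + Pr Fᶜ := by
      rw [← hsum]
      exact add_le_add_left hPrF _
    have := ENNReal.one_sub_inv_two
    calc (2 : ℝ≥0∞)⁻¹ = 1 - 2⁻¹ := this.symm
      _ ≤ Pr Fᶜ := by
        rw [tsub_le_iff_right, add_comm]
        exact h1
  have hpt : ∀ ω, Fᶜ.indicator (fun _ => (n : ℝ≥0∞)) ω ≤ f ω := by
    intro ω
    by_cases hω : ω ∈ Fᶜ
    · rw [Set.indicator_of_mem hω]
      have : ω ∉ {ω | Yf ω < n} := fun h => hω (subset_toMeasurable Pr _ h)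
      simp only [Set.mem_setOf_eq, not_lt] at this
      exact le_trans (by exact_mod_cast this) (hle ω)
    · rw [Set.indicator_of_notMem hω]
      exact zero_le
  calc ENNReal.ofReal ((n : ℝ) / 2)
      ≤ (n : ℝ≥0∞) * 2⁻¹ := by
        rw [show ((n : ℝ) / 2) = (n : ℝ) * (2 : ℝ)⁻¹ by ring, ENNReal.ofReal_mul (by positivity),
          ENNReal.ofReal_natCast, ENNReal.ofReal_inv_of_pos (by norm_num), ENNReal.ofReal_ofNat]
    _ ≤ (n : ℝ≥0∞) * Pr Fᶜ := mul_le_mul_of_nonneg_left hPrFc zero_le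
    _ = ∫⁻ ω, Fᶜ.indicator (fun _ => (n : ℝ≥0∞)) ω ∂Pr := by
        rw [lintegral_indicator_const hFm.compl]
    _ ≤ ∫⁻ ω, f ω ∂Pr := lintegral_mono hpt

lemma exp_one_ge_two : (2 : ℝ) ≤ Real.exp 1 := by nlinarith [Real.add_one_le_exp (1 : ℝ)]

lemma pmf_ofReal_le (x L : ℝ) (hx : 0 ≤ x) (hxL : x ≤ L) (k : ℕ) :
    poissonPMFReal x.toNNReal k ≤ Real.exp ((Real.exp 1 - 1) * L) * Real.exp (-(k : ℝ)) := by
  refine (poisson_pmf_le _ k).trans ?_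
  apply mul_le_mul_of_nonneg_right _ (Real.exp_nonneg _)
  apply Real.exp_le_exp.mpr
  apply mul_le_mul_of_nonneg_left _ (by nlinarith [exp_one_ge_two])
  rw [Real.coe_toNNReal _ hx]
  exact hxL

lemma htail_of_pmf {Ω : Type*} [MeasurableSpace Ω] (Pr : Measure Ω) (Y : Ω → ℕ) (L : ℝ)
    (hL : 0 ≤ L)
    (hpmf : ∀ k : ℕ, Pr {ω | Y ω = k} ≤
      ENNReal.ofReal (Real.exp ((Real.exp 1 - 1) * L) * Real.exp (-(k : ℝ)))) (j : ℕ) :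
    Pr {ω | ⌈(Real.exp 1 - 1) * L⌉₊ + 1 + j ≤ Y ω} ≤ ENNReal.ofReal (2 * Real.exp (-(j : ℝ))) := by
  set T₀ : ℕ := ⌈(Real.exp 1 - 1) * L⌉₊ with hT₀
  have hpmf' : ∀ k : ℕ, Pr {ω | Y ω = k} ≤
      ENNReal.ofReal (Real.exp ((Real.exp 1 - 1) * L) * Real.exp (-(k : ℝ))) := hpmf
  have := tail_le Pr Y (Real.exp ((Real.exp 1 - 1) * L)) (Real.exp_nonneg _) hpmf' (T₀ + 1 + j)
  refine this.trans (ENNReal.ofReal_le_ofReal ?_)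
  rw [mul_assoc, ← Real.exp_add]
  apply mul_le_mul_of_nonneg_left _ (by norm_num)
  apply Real.exp_le_exp.mpr
  have hceil : (Real.exp 1 - 1) * L ≤ T₀ := Nat.le_ceil _
  push_cast
  linarith

end PoissonAux

open PoissonAux

theorem poisson_sphere_max_count
    (d : ℕ) (hd : 2 ≤ d)
    {S : Type*} [MetricSpace S] [CompactSpace S] [MeasurableSpace S] [BorelSpace S]
    (m : Measure S) (hm : IsProbabilityMeasure m)
    (hball : ∃ k₁ k₂ : ℝ, 0 < k₁ ∧ 0 < k₂ ∧ ∀ (p : S) (α : ℝ), 0 < α → α ≤ Real.pi →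
      ENNReal.ofReal (k₁ * α ^ (d - 1)) ≤ m (ball p α) ∧
      m (ball p α) ≤ ENNReal.ofReal (k₂ * α ^ (d - 1)))
    {Ω : Type*} [MeasurableSpace Ω] (Pr : Measure Ω) [IsProbabilityMeasure Pr]
    (X : ℝ → Ω → Set S)
    (hfin : ∀ μ : ℝ, 0 < μ → ∀ᵐ ω ∂Pr, (X μ ω).Finite)
    -- Poisson counts:
    (hcounts : ∀ μ : ℝ, 0 < μ → ∀ A : Set S, MeasurableSet A → ∀ n : ℕ,
      Pr {ω | (X μ ω ∩ A).ncard = n} =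
        ENNReal.ofReal (poissonPMFReal (μ * (m A).toReal).toNNReal n))
    -- independence of counts over disjoint sets:
    (hindep : ∀ μ : ℝ, 0 < μ → ∀ {ι : Type} (A : ι → Set S),
      (∀ i, MeasurableSet (A i)) → Pairwise (Function.onFun Disjoint A) →
      iIndepFun
        (fun i ω => (X μ ω ∩ A i).ncard) Pr)
    (α : ℝ → ℝ) (hα : ∀ μ : ℝ, 0 < α μ ∧ α μ ≤ Real.pi)
    (haway : ∃ ε > (0 : ℝ), ∀ᶠ μ in atTop, ε ≤ α μ ^ (4 * (d - 1)) * μ) :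
    ∃ c C : ℝ, 0 < c ∧ 0 < C ∧ ∀ᶠ μ in atTop,
      ENNReal.ofReal (c * α μ ^ (d - 1) * μ) ≤
          ∫⁻ ω, ⨆ p : S, ((X μ ω ∩ ball p (α μ)).ncard : ENNReal) ∂Pr ∧
        ∫⁻ ω, ⨆ p : S, ((X μ ω ∩ ball p (α μ)).ncard : ENNReal) ∂Pr ≤
          ENNReal.ofReal (C * α μ ^ (d - 1) * μ) := by
  classical
  obtain ⟨k₁, k₂, hk₁, hk₂, hballs⟩ := hball
  obtain ⟨ε, hε, hev⟩ := haway
  have hπ : 0 < Real.pi := Real.pi_pos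
  have hS : Nonempty S := by
    by_contra h
    rw [not_nonempty_iff] at h
    have h1 : m Set.univ = 1 := measure_univ
    rw [Set.univ_eq_empty_iff.mpr h] at h1
    simp at h1
  obtain ⟨p₀⟩ := hS
  have he1 : (0:ℝ) < Real.exp 1 - 1 := by nlinarith [exp_one_ge_two]
  set e1 : ℝ := Real.exp 1 - 1 with he1def
  set D : ℕ := d - 1 with hDdef
  set C : ℝ := e1 * k₂ * 2 ^ D + 1 + 4 * (2 ^ D * Real.pi ^ (2 * D) / (k₁ * ε))
      + (e1 + 5) * (2 / Real.pi) ^ D with hCdef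
  have hC0 : 0 < C := by
    have h1 : (0:ℝ) < e1 * k₂ * 2 ^ D := by
      apply mul_pos (mul_pos he1 hk₂) (pow_pos two_pos D)
    have h2 : (0:ℝ) < 4 * (2 ^ D * Real.pi ^ (2 * D) / (k₁ * ε)) := by positivity
    have h3 : (0:ℝ) < (e1 + 5) * (2 / Real.pi) ^ D := by
      apply mul_pos (by linarith) (pow_pos (by positivity) D)
    rw [hCdef]; exact add_pos (add_pos (add_pos h1 one_pos) h2) h3
  refine ⟨k₁ / 8, C, by positivity, hC0, ?_⟩
  set R : ℝ := max 1 (8 / k₁) with hRdef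
  have hR1 : (1:ℝ) ≤ R := le_max_left _ _
  have hR0 : (0:ℝ) < R := lt_of_lt_of_le one_pos hR1
  filter_upwards [hev, eventually_ge_atTop (max 5 (R ^ 4 / ε))] with μ hA hM
  have hμ5 : (5:ℝ) ≤ μ := le_trans (le_max_left _ _) hM
  have hμ1 : (1:ℝ) ≤ μ := by linarith
  have hμ0 : (0:ℝ) < μ := by linarith
  obtain ⟨ha, haπ⟩ := hα μ
  set a : ℝ := α μ with hadef
  have haD : (0:ℝ) < a ^ D := pow_pos ha D
  -- a^D * μ is eventually large
  have hRle : R ≤ a ^ D * μ := by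
    have hpow : a ^ (4 * D) = (a ^ D) ^ 4 := by rw [Nat.mul_comm, pow_mul]
    have hμ3 : μ ≤ μ ^ 3 := by
      have h11 : 1 * 1 ≤ μ * μ := mul_le_mul hμ1 hμ1 zero_le_one hμ0.le
      nlinarith [h11, hμ0.le]
    have hMR : R ^ 4 / ε ≤ μ := le_trans (le_max_right _ _) hM
    have h2 : R ^ 4 ≤ ε * μ ^ 3 := by
      calc R ^ 4 = ε * (R ^ 4 / ε) := by field_simp
        _ ≤ ε * μ := mul_le_mul_of_nonneg_left hMR hε.le
        _ ≤ ε * μ ^ 3 := mul_le_mul_of_nonneg_left hμ3 hε.le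
    have h1 : ε * μ ^ 3 ≤ (a ^ D * μ) ^ 4 := by
      have h1' : ε * μ ^ 3 ≤ a ^ (4 * D) * μ * μ ^ 3 :=
        mul_le_mul_of_nonneg_right hA (by positivity)
      calc ε * μ ^ 3 ≤ a ^ (4 * D) * μ * μ ^ 3 := h1'
        _ = (a ^ D * μ) ^ 4 := by rw [hpow]; ring
    exact le_of_pow_le_pow_left₀ (by norm_num) (by positivity) (h2.trans h1)
  have haD1 : (1:ℝ) ≤ a ^ D * μ := le_trans hR1 hRle
  have h8 : (8:ℝ) ≤ k₁ * (a ^ D * μ) := by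
    have : 8 / k₁ ≤ a ^ D * μ := le_trans (le_max_right _ _) hRle
    rw [div_le_iff₀ hk₁] at this
    linarith [this]
  constructor
  · -- LOWER BOUND
    have hB₀m : MeasurableSet (ball p₀ a) := measurableSet_ball
    obtain ⟨hBlo, hBhi⟩ := hballs p₀ a ha haπ
    set L : ℝ := μ * (m (ball p₀ a)).toReal with hLdef
    have hmB : k₁ * a ^ D ≤ (m (ball p₀ a)).toReal := by
      have := ENNReal.toReal_mono (measure_ne_top m _) hBlo
      rwa [ENNReal.toReal_ofReal (by positivity)] at this
    have hLlo : k₁ * (a ^ D * μ) ≤ L := by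
      rw [hLdef]
      calc k₁ * (a ^ D * μ) = μ * (k₁ * a ^ D) := by ring
        _ ≤ μ * (m (ball p₀ a)).toReal := mul_le_mul_of_nonneg_left hmB hμ0.le
    have hL8 : (8:ℝ) ≤ L := le_trans h8 hLlo
    have hL0 : (0:ℝ) < L := by linarith
    set n : ℕ := ⌈L / 4⌉₊ with hndef
    have hn1 : L / 4 ≤ (n:ℝ) := Nat.le_ceil _
    have hn2 : (n:ℝ) ≤ L / 2 := by
      have := Nat.ceil_lt_add_one (by positivity : (0:ℝ) ≤ L / 4)
      have h4 : L / 4 + 1 ≤ L / 2 := by linarith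
      linarith
    have hco : ((L.toNNReal : ℝ≥0) : ℝ) = L := Real.coe_toNNReal _ hL0.le
    have hhead : Pr {ω | (X μ ω ∩ ball p₀ a).ncard < n} ≤ ENNReal.ofReal (1 / 2) := by
      have hsub : {ω | (X μ ω ∩ ball p₀ a).ncard < n} ⊆
          ⋃ k ∈ Finset.range n, {ω | (X μ ω ∩ ball p₀ a).ncard = k} := by
        intro ω hω
        simp only [Set.mem_setOf_eq] at hω
        simp only [Set.mem_iUnion, Set.mem_setOf_eq, Finset.mem_range, exists_prop]
        exact ⟨_, hω, rfl⟩
      calc Pr {ω | (X μ ω ∩ ball p₀ a).ncard < n}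
          ≤ ∑ k ∈ Finset.range n, Pr {ω | (X μ ω ∩ ball p₀ a).ncard = k} :=
            (measure_mono hsub).trans (measure_biUnion_finset_le _ _)
        _ = ∑ k ∈ Finset.range n, ENNReal.ofReal (poissonPMFReal L.toNNReal k) := by
            refine Finset.sum_congr rfl fun k _ => ?_
            exact hcounts μ hμ0 (ball p₀ a) hB₀m k
        _ = ENNReal.ofReal (∑ k ∈ Finset.range n, poissonPMFReal L.toNNReal k) :=
            (ENNReal.ofReal_sum_of_nonneg fun k _ => poissonPMFReal_nonneg).symm
        _ ≤ ENNReal.ofReal (4 / (L.toNNReal : ℝ)) := by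
            apply ENNReal.ofReal_le_ofReal
            exact poisson_head_le L.toNNReal (by rw [hco]; exact hL0) n (by rw [hco]; exact hn2)
        _ ≤ ENNReal.ofReal (1 / 2) := by
            apply ENNReal.ofReal_le_ofReal
            rw [hco, div_le_div_iff₀ hL0 (by norm_num)]
            linarith
    have hlow := lintegral_ge_of_head Pr (fun ω => (X μ ω ∩ ball p₀ a).ncard) n hhead
      (fun ω => ⨆ p : S, ((X μ ω ∩ ball p a).ncard : ℝ≥0∞))
      (fun ω => le_iSup (fun p : S => ((X μ ω ∩ ball p a).ncard : ℝ≥0∞)) p₀)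
    refine le_trans (ENNReal.ofReal_le_ofReal ?_) hlow
    calc k₁ / 8 * a ^ D * μ = (k₁ * (a ^ D * μ)) / 8 := by ring
      _ ≤ L / 8 := by linarith
      _ ≤ (n:ℝ) / 2 := by linarith
  · -- UPPER BOUND
    by_cases hcase : 2 * a ≤ Real.pi
    · -- main case: covering net at scale a, balls of radius 2a
      obtain ⟨T, hTnet, hTsep⟩ := exists_net (S := S) a ha
      have ha2 : (0:ℝ) < a / 2 := by linarith
      have hpack : (T.card : ℝ) * (k₁ * (a / 2) ^ D) ≤ 1 := by
        have hdisj : (T : Set S).PairwiseDisjoint (fun t => ball t (a / 2)) := by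
          intro x hx y hy hxy
          apply Set.disjoint_left.mpr
          intro z hzx hzy
          rw [mem_ball] at hzx hzy
          have hsep := hTsep hx hy hxy
          have : dist x y < a := by
            calc dist x y ≤ dist z x + dist z y := dist_triangle_left _ _ _
              _ < a / 2 + a / 2 := add_lt_add hzx hzy
              _ = a := add_halves a
          linarith
        have hkey : (T.card : ℝ≥0∞) * ENNReal.ofReal (k₁ * (a / 2) ^ D) ≤ 1 := by
          calc (T.card : ℝ≥0∞) * ENNReal.ofReal (k₁ * (a / 2) ^ D)
              = ∑ t ∈ T, ENNReal.ofReal (k₁ * (a / 2) ^ D) := by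
                rw [Finset.sum_const, nsmul_eq_mul]
            _ ≤ ∑ t ∈ T, m (ball t (a / 2)) :=
                Finset.sum_le_sum fun t _ => (hballs t (a / 2) ha2 (by linarith)).1
            _ = m (⋃ t ∈ T, ball t (a / 2)) :=
                (measure_biUnion_finset hdisj fun t _ => measurableSet_ball).symm
            _ ≤ 1 := prob_le_one
        rw [← ENNReal.ofReal_natCast T.card, ← ENNReal.ofReal_mul (by positivity)] at hkey
        exact ENNReal.ofReal_le_one.mp hkey
      set Λ : ℝ := k₂ * (2 * a) ^ D * μ with hΛdef
      have hΛ0 : (0:ℝ) < Λ := mul_pos (mul_pos hk₂ (pow_pos (by linarith) D)) hμ0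
      have hpmfb : ∀ t ∈ T, ∀ k : ℕ, Pr {ω | (X μ ω ∩ ball t (2 * a)).ncard = k} ≤
          ENNReal.ofReal (Real.exp (e1 * Λ) * Real.exp (-(k : ℝ))) := by
        intro t _ k
        rw [hcounts μ hμ0 (ball t (2 * a)) measurableSet_ball k]
        apply ENNReal.ofReal_le_ofReal
        apply pmf_ofReal_le _ _ (mul_nonneg hμ0.le ENNReal.toReal_nonneg) _ k
        have h2 := (hballs t (2 * a) (by linarith) hcase).2
        have h3 := ENNReal.toReal_mono ENNReal.ofReal_ne_top h2
        rw [ENNReal.toReal_ofReal (by positivity)] at h3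
        calc μ * (m (ball t (2 * a))).toReal ≤ μ * (k₂ * (2 * a) ^ D) :=
              mul_le_mul_of_nonneg_left h3 hμ0.le
          _ = Λ := by rw [hΛdef]; ring
      set T₀ : ℕ := ⌈e1 * Λ⌉₊ with hT₀def
      have htail : ∀ t ∈ T, ∀ j : ℕ,
          Pr {ω | T₀ + 1 + j ≤ (X μ ω ∩ ball t (2 * a)).ncard} ≤
            ENNReal.ofReal (2 * Real.exp (-(j : ℝ))) := fun t ht j =>
        htail_of_pmf Pr (fun ω => (X μ ω ∩ ball t (2 * a)).ncard) Λ hΛ0.le (hpmfb t ht) j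
      have hfb : ∀ᵐ ω ∂Pr, ∃ t ∈ T,
          (⨆ p : S, ((X μ ω ∩ ball p a).ncard : ℝ≥0∞)) ≤
            (((X μ ω ∩ ball t (2 * a)).ncard : ℕ) : ℝ≥0∞) := by
        filter_upwards [hfin μ hμ0] with ω hfinω
        have hTne : T.Nonempty := by
          obtain ⟨t, ht, -⟩ := hTnet p₀
          exact ⟨t, ht⟩
        obtain ⟨ts, hts, hmax⟩ :=
          T.exists_max_image (fun t => (X μ ω ∩ ball t (2 * a)).ncard) hTne
        refine ⟨ts, hts, ?_⟩
        apply iSup_le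
        intro p
        obtain ⟨t, ht, hdist⟩ := hTnet p
        have hsub : ball p a ⊆ ball t (2 * a) := by
          intro y hy
          rw [mem_ball] at hy ⊢
          calc dist y t ≤ dist y p + dist p t := dist_triangle _ _ _
            _ < a + a := add_lt_add hy hdist
            _ = 2 * a := by ring
        have h1 : (X μ ω ∩ ball p a).ncard ≤ (X μ ω ∩ ball t (2 * a)).ncard :=
          Set.ncard_le_ncard (Set.inter_subset_inter_right _ hsub)
            (hfinω.subset Set.inter_subset_left)
        exact_mod_cast h1.trans (hmax t ht)
      have hup := lintegral_layered Pr T (fun t ω => (X μ ω ∩ ball t (2 * a)).ncard) T₀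
        htail _ hfb
      refine hup.trans ?_
      -- numeric finish
      have he1Λ : (0:ℝ) ≤ e1 * Λ := mul_nonneg he1.le hΛ0.le
      have hceil : (T₀ : ℝ) ≤ e1 * Λ + 1 := (Nat.ceil_lt_add_one he1Λ).le
      have h2D : (0:ℝ) < (2:ℝ) ^ D := by positivity
      have hpack' : (T.card : ℝ) * k₁ * a ^ D ≤ 2 ^ D := by
        have hdp : (a / 2) ^ D = a ^ D / 2 ^ D := div_pow a 2 D
        rw [hdp] at hpack
        calc (T.card : ℝ) * k₁ * a ^ D
            = (T.card : ℝ) * (k₁ * (a ^ D / 2 ^ D)) * 2 ^ D := by field_simp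
          _ ≤ 1 * 2 ^ D := mul_le_mul_of_nonneg_right hpack h2D.le
          _ = 2 ^ D := one_mul _
      have hε2 : ε ≤ Real.pi ^ (2 * D) * (a ^ D * a ^ D) * μ := by
        have haππ : a ^ (2 * D) ≤ Real.pi ^ (2 * D) := pow_le_pow_left₀ ha.le haπ _
        have ha4 : a ^ (4 * D) = a ^ (2 * D) * a ^ (2 * D) := by
          rw [← pow_add]; congr 1; omega
        have ha2 : a ^ (2 * D) = a ^ D * a ^ D := by
          rw [← pow_add]; congr 1; omega
        have ha2nn : (0:ℝ) ≤ a ^ (2 * D) := by positivity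
        calc ε ≤ a ^ (4 * D) * μ := hA
          _ = a ^ (2 * D) * (a ^ (2 * D)) * μ := by rw [ha4]
          _ ≤ Real.pi ^ (2 * D) * (a ^ (2 * D)) * μ := by
              apply mul_le_mul_of_nonneg_right _ hμ0.le
              exact mul_le_mul_of_nonneg_right haππ ha2nn
          _ = Real.pi ^ (2 * D) * (a ^ D * a ^ D) * μ := by rw [ha2]
      have hN : (T.card : ℝ) ≤ 2 ^ D * Real.pi ^ (2 * D) / (k₁ * ε) * (a ^ D * μ) := by
        rw [div_mul_eq_mul_div, le_div_iff₀ (by positivity)]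
        calc (T.card : ℝ) * (k₁ * ε) = ((T.card : ℝ) * k₁) * ε := by ring
          _ ≤ ((T.card : ℝ) * k₁) * (Real.pi ^ (2 * D) * (a ^ D * a ^ D) * μ) := by
              apply mul_le_mul_of_nonneg_left hε2
              positivity
          _ = ((T.card : ℝ) * k₁ * a ^ D) * (Real.pi ^ (2 * D) * a ^ D * μ) := by ring
          _ ≤ 2 ^ D * (Real.pi ^ (2 * D) * a ^ D * μ) := by
              apply mul_le_mul_of_nonneg_right hpack'
              positivity
          _ = 2 ^ D * Real.pi ^ (2 * D) * (a ^ D * μ) := by ring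
      have hreal : e1 * Λ + 1 + 4 * (T.card : ℝ) ≤ C * a ^ D * μ := by
        have ht1 : e1 * Λ = e1 * k₂ * 2 ^ D * (a ^ D * μ) := by
          rw [hΛdef, mul_pow]; ring
        have ht3 : 4 * (T.card : ℝ) ≤ 4 * (2 ^ D * Real.pi ^ (2 * D) / (k₁ * ε)) * (a ^ D * μ) := by
          rw [mul_assoc]
          exact mul_le_mul_of_nonneg_left hN (by norm_num)
        have ht4 : (0:ℝ) ≤ (e1 + 5) * (2 / Real.pi) ^ D * (a ^ D * μ) := by
          apply mul_nonneg (mul_nonneg (by linarith) (pow_nonneg (by positivity) D))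
          positivity
        have hexp : C * a ^ D * μ = e1 * k₂ * 2 ^ D * (a ^ D * μ) + 1 * (a ^ D * μ)
            + 4 * (2 ^ D * Real.pi ^ (2 * D) / (k₁ * ε)) * (a ^ D * μ)
            + (e1 + 5) * (2 / Real.pi) ^ D * (a ^ D * μ) := by
          rw [hCdef]; ring
        have h2' : (1:ℝ) ≤ 1 * (a ^ D * μ) := by rw [one_mul]; exact haD1
        rw [ht1, hexp]
        exact le_trans (add_le_add (add_le_add le_rfl h2') ht3) (le_add_of_nonneg_right ht4)
      have hof1 : (T₀ : ℝ≥0∞) ≤ ENNReal.ofReal (e1 * Λ + 1) := by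
        rw [← ENNReal.ofReal_natCast T₀]
        exact ENNReal.ofReal_le_ofReal hceil
      have hof2 : (T.card : ℝ≥0∞) * ENNReal.ofReal 4 = ENNReal.ofReal (4 * (T.card : ℝ)) := by
        rw [← ENNReal.ofReal_natCast T.card, ← ENNReal.ofReal_mul (by positivity), mul_comm]
      calc (T₀ : ℝ≥0∞) + (T.card : ℝ≥0∞) * ENNReal.ofReal 4
          ≤ ENNReal.ofReal (e1 * Λ + 1) + ENNReal.ofReal (4 * (T.card : ℝ)) := by
            rw [hof2]; exact add_le_add hof1 le_rfl
        _ = ENNReal.ofReal (e1 * Λ + 1 + 4 * (T.card : ℝ)) :=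
            (ENNReal.ofReal_add (by linarith) (by positivity)).symm
        _ ≤ ENNReal.ofReal (C * a ^ D * μ) := ENNReal.ofReal_le_ofReal hreal
    · -- degenerate case: π < 2a, compare with the total number of points
      push_neg at hcase
      have hpmf1 : ∀ k : ℕ, Pr {ω | (X μ ω ∩ (Set.univ : Set S)).ncard = k} ≤
          ENNReal.ofReal (Real.exp (e1 * μ) * Real.exp (-(k : ℝ))) := by
        intro k
        rw [hcounts μ hμ0 Set.univ MeasurableSet.univ k]
        apply ENNReal.ofReal_le_ofReal
        have hu : μ * (m Set.univ).toReal = μ := by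
          rw [measure_univ, ENNReal.toReal_one, mul_one]
        rw [hu]
        exact pmf_ofReal_le μ μ hμ0.le le_rfl k
      set T₀ : ℕ := ⌈e1 * μ⌉₊ with hT₀def
      have htail : ∀ t ∈ ({0} : Finset ℕ), ∀ j : ℕ,
          Pr {ω | T₀ + 1 + j ≤ (X μ ω ∩ (Set.univ : Set S)).ncard} ≤
            ENNReal.ofReal (2 * Real.exp (-(j : ℝ))) := fun t _ j =>
        htail_of_pmf Pr _ μ hμ0.le hpmf1 j
      have hfb : ∀ᵐ ω ∂Pr, ∃ t ∈ ({0} : Finset ℕ),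
          (⨆ p : S, ((X μ ω ∩ ball p a).ncard : ℝ≥0∞)) ≤
            (((X μ ω ∩ (Set.univ : Set S)).ncard : ℕ) : ℝ≥0∞) := by
        filter_upwards [hfin μ hμ0] with ω hfinω
        refine ⟨0, Finset.mem_singleton_self 0, ?_⟩
        apply iSup_le
        intro p
        have h1 : (X μ ω ∩ ball p a).ncard ≤ (X μ ω ∩ (Set.univ : Set S)).ncard :=
          Set.ncard_le_ncard (Set.inter_subset_inter_right _ (Set.subset_univ _))
            (hfinω.subset Set.inter_subset_left)
        exact_mod_cast h1
      have hup := lintegral_layered Pr ({0} : Finset ℕ)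
        (fun _ ω => (X μ ω ∩ (Set.univ : Set S)).ncard) T₀ htail _ hfb
      refine hup.trans ?_
      have he1μ : (0:ℝ) ≤ e1 * μ := mul_nonneg he1.le hμ0.le
      have hceil : (T₀ : ℝ) ≤ e1 * μ + 1 := (Nat.ceil_lt_add_one he1μ).le
      have hreal : e1 * μ + 1 + 4 ≤ C * a ^ D * μ := by
        have hq : (1:ℝ) ≤ (2 / Real.pi) ^ D * a ^ D := by
          rw [← mul_pow]
          apply one_le_pow₀
          rw [div_mul_eq_mul_div, le_div_iff₀ hπ]
          linarith
        have hterm : e1 * μ + 5 ≤ (e1 + 5) * ((2 / Real.pi) ^ D * a ^ D) * μ := by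
          have h5 : e1 * μ + 5 ≤ (e1 + 5) * μ := by
            have : (e1 + 5) * μ = e1 * μ + 5 * μ := by ring
            linarith
          calc e1 * μ + 5 ≤ (e1 + 5) * μ := h5
            _ = (e1 + 5) * 1 * μ := by ring
            _ ≤ (e1 + 5) * ((2 / Real.pi) ^ D * a ^ D) * μ := by
                apply mul_le_mul_of_nonneg_right
                  (mul_le_mul_of_nonneg_left hq (by linarith)) hμ0.le
        have hothers : (0:ℝ) ≤
            (e1 * k₂ * 2 ^ D + 1 + 4 * (2 ^ D * Real.pi ^ (2 * D) / (k₁ * ε))) * (a ^ D * μ) := by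
          apply mul_nonneg _ (by positivity)
          have h1 : (0:ℝ) ≤ e1 * k₂ * 2 ^ D :=
            le_of_lt (mul_pos (mul_pos he1 hk₂) (pow_pos two_pos D))
          have h2 : (0:ℝ) ≤ 4 * (2 ^ D * Real.pi ^ (2 * D) / (k₁ * ε)) := by positivity
          exact add_nonneg (add_nonneg h1 zero_le_one) h2
        have hexp : C * a ^ D * μ =
            (e1 * k₂ * 2 ^ D + 1 + 4 * (2 ^ D * Real.pi ^ (2 * D) / (k₁ * ε))) * (a ^ D * μ)
              + (e1 + 5) * ((2 / Real.pi) ^ D * a ^ D) * μ := by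
          rw [hCdef]; ring
        rw [hexp]
        calc e1 * μ + 1 + 4 = e1 * μ + 5 := by ring
          _ ≤ (e1 + 5) * ((2 / Real.pi) ^ D * a ^ D) * μ := hterm
          _ ≤ _ := le_add_of_nonneg_left hothers
      have hof1 : (T₀ : ℝ≥0∞) ≤ ENNReal.ofReal (e1 * μ + 1) := by
        rw [← ENNReal.ofReal_natCast T₀]
        exact ENNReal.ofReal_le_ofReal hceil
      have hcard : ((({0} : Finset ℕ).card : ℕ) : ℝ≥0∞) = 1 := by simp
      calc (T₀ : ℝ≥0∞) + ((({0} : Finset ℕ).card : ℕ) : ℝ≥0∞) * ENNReal.ofReal 4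
          ≤ ENNReal.ofReal (e1 * μ + 1) + ENNReal.ofReal 4 := by
            rw [hcard, one_mul]
            exact add_le_add hof1 le_rfl
        _ = ENNReal.ofReal (e1 * μ + 1 + 4) := (ENNReal.ofReal_add (by linarith) (by norm_num)).symm
        _ ≤ ENNReal.ofReal (C * a ^ D * μ) := ENNReal.ofReal_le_ofReal hreal
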